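/- Stability of the continuous dememorized system. Let H be a real Hilbert space, M a positive integer, and for each i = 1, …, M let Rᵢ : H → H be a continuous linear operator that is symmetric (⟨Rᵢx, y⟩ = ⟨x, Rᵢy⟩) and positive semidefinite (⟨Rᵢx, x⟩ ≥ 0), and let βᵢ ≥ 0. Let T > 0 and let u : [0,T] → H and vᵢ : [0,T] → H (i = 1, …, M) be differentiable functions satisfying u′(t) = −Σᵢ₌₁ᴹ Rᵢ(vᵢ(t)) and vᵢ′(t) = u(t) − βᵢ vᵢ(t) for all t ∈ [0,T]. Then the energy E(t) := ‖u(t)‖² + Σᵢ₌₁ᴹ ⟨Rᵢ vᵢ(t), vᵢ(t)⟩ is nonincreasing on [0,T]; in particular E(T) ≤ E(0). -/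

import Mathlib

open RealInnerProductSpace

/-- Stability of the continuous dememorized system: the energy is nonincreasing
on `[0, T]`; in particular `E T ≤ E 0`. -/
theorem dememorized_continuous_stability
    {H : Type*} [NormedAddCommGroup H] [InnerProductSpace ℝ H] [CompleteSpace H]
    (M : ℕ) (hM : 0 < M)
    (R : Fin M → H →L[ℝ] H)
    (hsym : ∀ i, ∀ x y : H, ⟪R i x, y⟫ = ⟪x, R i y⟫)
    (hpos : ∀ i, ∀ x : H, 0 ≤ ⟪R i x, x⟫)
    (β : Fin M → ℝ) (hβ : ∀ i, 0 ≤ β i)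
    (T : ℝ) (hT : 0 < T)
    (u : ℝ → H) (v : Fin M → ℝ → H)
    (hu : ∀ t ∈ Set.Icc (0 : ℝ) T, HasDerivAt u (-(∑ i, R i (v i t))) t)
    (hv : ∀ i, ∀ t ∈ Set.Icc (0 : ℝ) T, HasDerivAt (v i) (u t - β i • v i t) t) :
    AntitoneOn (fun t => ‖u t‖ ^ 2 + ∑ i, ⟪R i (v i t), v i t⟫) (Set.Icc (0 : ℝ) T) ∧
    ‖u T‖ ^ 2 + ∑ i, ⟪R i (v i T), v i T⟫ ≤ ‖u 0‖ ^ 2 + ∑ i, ⟪R i (v i 0), v i 0⟫ := by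
  set E : ℝ → ℝ := fun t => ‖u t‖ ^ 2 + ∑ i, ⟪R i (v i t), v i t⟫ with hEdef
  have key : ∀ t ∈ Set.Icc (0 : ℝ) T,
      HasDerivAt E (-(2 * ∑ i, β i * ⟪R i (v i t), v i t⟫)) t := by
    intro t ht
    have hu' := hu t ht
    have h1 : HasDerivAt (fun s => ‖u s‖ ^ 2)
        (⟪u t, -(∑ i, R i (v i t))⟫ + ⟪-(∑ i, R i (v i t)), u t⟫) t := by
      have := hu'.inner ℝ hu'
      refine this.congr_of_eventuallyEq ?_
      filter_upwards with s
      rw [real_inner_self_eq_norm_sq]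
    have h2 : ∀ i : Fin M, HasDerivAt (fun s => ⟪R i (v i s), v i s⟫)
        (⟪R i (v i t), u t - β i • v i t⟫ + ⟪R i (u t - β i • v i t), v i t⟫) t := by
      intro i
      have hvi := hv i t ht
      have hRv : HasDerivAt (fun s => R i (v i s)) (R i (u t - β i • v i t)) t :=
        (R i).hasFDerivAt.comp_hasDerivAt t hvi
      exact hRv.inner ℝ hvi
    have hsum : HasDerivAt (fun s => ∑ i, ⟪R i (v i s), v i s⟫)
        (∑ i, (⟪R i (v i t), u t - β i • v i t⟫ + ⟪R i (u t - β i • v i t), v i t⟫)) t :=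
      HasDerivAt.fun_sum fun i _ => h2 i
    have hE := h1.add hsum
    refine hE.congr_deriv ?_
    have hinner : ∀ i : Fin M,
        ⟪R i (v i t), u t - β i • v i t⟫ + ⟪R i (u t - β i • v i t), v i t⟫
        = 2 * ⟪R i (v i t), u t⟫ - 2 * (β i * ⟪R i (v i t), v i t⟫) := by
      intro i
      have hs1 : ⟪R i (u t), v i t⟫ = ⟪R i (v i t), u t⟫ := by
        rw [hsym i, real_inner_comm]
      rw [inner_sub_right, map_sub, inner_sub_left, map_smul, inner_smul_left,
        inner_smul_right, hs1]
      simp only [starRingEnd_apply, star_trivial]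
      ring
    rw [Finset.sum_congr rfl (fun i _ => hinner i), Finset.sum_sub_distrib]
    have : ⟪u t, -(∑ i, R i (v i t))⟫ + ⟪-(∑ i, R i (v i t)), u t⟫
        = -(2 * ∑ i, ⟪R i (v i t), u t⟫) := by
      rw [inner_neg_left, inner_neg_right, real_inner_comm, sum_inner]
      ring
    rw [this, ← Finset.mul_sum, ← Finset.mul_sum]
    ring
  have hanti : AntitoneOn E (Set.Icc (0 : ℝ) T) := by
    apply antitoneOn_of_deriv_nonpos (convex_Icc 0 T)
    · exact fun t ht => ((key t ht).continuousAt).continuousWithinAt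
    · intro t ht
      rw [interior_Icc] at ht
      exact ((key t (Set.mem_Icc_of_Ioo ht)).differentiableAt).differentiableWithinAt
    · intro t ht
      rw [interior_Icc] at ht
      rw [(key t (Set.mem_Icc_of_Ioo ht)).deriv]
      have : 0 ≤ ∑ i, β i * ⟪R i (v i t), v i t⟫ :=
        Finset.sum_nonneg fun i _ => mul_nonneg (hβ i) (hpos i (v i t))
      linarith
  exact ⟨hanti, hanti (Set.left_mem_Icc.2 hT.le) (Set.right_mem_Icc.2 hT.le) hT.le⟩
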